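/- As n → ∞, the sum ∑ 1/(rℓ + rs + sℓ), taken over all integers k₁ ≥ 1, r ≥ 1, ℓ ≥ 1, s ≥ 1 with k₁ + r + ℓ + s ≤ n, is asymptotically equivalent to J·n², where J := ∫_{[0,1]³} (1 − (u+v+w))·𝟙_{u+v+w ≤ 1} / (uv + uw + vw) du dv dw. -/

import Mathlib

open Filter Finset MeasureTheory

set_option maxHeartbeats 1000000


noncomputable def gg : ℝ × ℝ × ℝ → ℝ := fun q =>
  if q.1 + q.2.1 + q.2.2 ≤ 1 then
    (1 - (q.1 + q.2.1 + q.2.2)) / (q.1 * q.2.1 + q.1 * q.2.2 + q.2.1 * q.2.2)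
  else 0

lemma gg_nonneg {q : ℝ × ℝ × ℝ} (h1 : 0 ≤ q.1) (h2 : 0 ≤ q.2.1) (h3 : 0 ≤ q.2.2) :
    0 ≤ gg q := by
  unfold gg
  split
  · exact div_nonneg (by linarith) (by positivity)
  · exact le_refl 0

lemma gg_anti {a b : ℝ × ℝ × ℝ} (ha1 : 0 < a.1) (ha2 : 0 < a.2.1) (ha3 : 0 < a.2.2)
    (h1 : a.1 ≤ b.1) (h2 : a.2.1 ≤ b.2.1) (h3 : a.2.2 ≤ b.2.2) : gg b ≤ gg a := by
  by_cases hb : b.1 + b.2.1 + b.2.2 ≤ 1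
  · have hacond : a.1 + a.2.1 + a.2.2 ≤ 1 := by linarith
    unfold gg
    rw [if_pos hb, if_pos hacond]
    apply div_le_div₀ (by linarith) (by linarith) (by positivity) (by nlinarith)
  · have : gg b = 0 := by unfold gg; rw [if_neg hb]
    rw [this]
    exact gg_nonneg (by linarith) (by linarith) (by linarith)

lemma measurable_gg : Measurable gg := by
  unfold gg
  apply Measurable.ite
  · exact measurableSet_le (by fun_prop) measurable_const
  · fun_prop
  · fun_prop


lemma integrableOn_rpow23 : IntegrableOn (fun x : ℝ => x ^ (-(2/3) : ℝ)) (Set.Icc 0 2) := by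
  have h := intervalIntegral.intervalIntegrable_rpow' (a := 0) (b := 2) (r := -(2/3)) (by norm_num)
  rw [intervalIntegrable_iff_integrableOn_Ioc_of_le (by norm_num)] at h
  rwa [integrableOn_Icc_iff_integrableOn_Ioc]

noncomputable def hh : ℝ × ℝ × ℝ → ℝ := fun q =>
  q.1 ^ (-(2/3) : ℝ) * (q.2.1 ^ (-(2/3) : ℝ) * q.2.2 ^ (-(2/3) : ℝ))

lemma integrable_hh : IntegrableOn hh (Set.Icc 0 2 ×ˢ Set.Icc 0 2 ×ˢ Set.Icc (0:ℝ) 2) := by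
  have h1 := integrableOn_rpow23
  have h2 : Integrable (fun p : ℝ × ℝ => p.1 ^ (-(2/3):ℝ) * p.2 ^ (-(2/3):ℝ))
      ((volume.restrict (Set.Icc 0 2)).prod (volume.restrict (Set.Icc (0:ℝ) 2))) :=
    Integrable.mul_prod h1 h1
  rw [MeasureTheory.Measure.prod_restrict, ← MeasureTheory.Measure.volume_eq_prod] at h2
  have h3 : Integrable (fun q : ℝ × ℝ × ℝ => q.1 ^ (-(2/3):ℝ) * (q.2.1 ^ (-(2/3):ℝ) * q.2.2 ^ (-(2/3):ℝ)))
      ((volume.restrict (Set.Icc 0 2)).prod (volume.restrict (Set.Icc 0 2 ×ˢ Set.Icc (0:ℝ) 2))) :=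
    Integrable.mul_prod h1 h2
  rw [MeasureTheory.Measure.prod_restrict, ← MeasureTheory.Measure.volume_eq_prod] at h3
  exact h3



lemma hh_pos {q : ℝ × ℝ × ℝ} (h1 : 0 < q.1) (h2 : 0 < q.2.1) (h3 : 0 < q.2.2) : 0 < hh q := by
  unfold hh; positivity

lemma gg_le_hh {q : ℝ × ℝ × ℝ} (h1 : 0 < q.1) (h2 : 0 < q.2.1) (h3 : 0 < q.2.2) :
    gg q ≤ hh q := by
  obtain ⟨u, v, w⟩ := q
  simp only at h1 h2 h3 ⊢
  unfold gg hh
  simp only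
  split
  · rename_i hc
    set D : ℝ := u * v + u * w + v * w with hD
    have hDpos : 0 < D := by positivity
    have step1 : (1 - (u + v + w)) / D ≤ 1 / D := by
      gcongr
      linarith
    have hG : u ^ (2/3:ℝ) * (v ^ (2/3:ℝ) * w ^ (2/3:ℝ)) ≤ D := by
      have amgm := Real.geom_mean_le_arith_mean3_weighted (w₁ := 1/3) (w₂ := 1/3) (w₃ := 1/3)
        (p₁ := u*v) (p₂ := u*w) (p₃ := v*w) (by norm_num) (by norm_num) (by norm_num)
        (by positivity) (by positivity) (by positivity) (by norm_num)
      have hGeq : (u*v) ^ (1/3:ℝ) * (u*w) ^ (1/3:ℝ) * (v*w) ^ (1/3:ℝ)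
          = u ^ (2/3:ℝ) * (v ^ (2/3:ℝ) * w ^ (2/3:ℝ)) := by
        rw [Real.mul_rpow h1.le h2.le, Real.mul_rpow h1.le h3.le, Real.mul_rpow h2.le h3.le,
          show (2/3:ℝ) = 1/3 + 1/3 by norm_num, Real.rpow_add h1, Real.rpow_add h2,
          Real.rpow_add h3]
        ring
      rw [hGeq] at amgm
      nlinarith [mul_pos h1 h2, mul_pos h1 h3, mul_pos h2 h3]
    have hP : (0:ℝ) < u ^ (2/3:ℝ) * (v ^ (2/3:ℝ) * w ^ (2/3:ℝ)) := by positivity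
    have step2 : 1 / D ≤ u ^ (-(2/3):ℝ) * (v ^ (-(2/3):ℝ) * w ^ (-(2/3):ℝ)) := by
      have : u ^ (-(2/3):ℝ) * (v ^ (-(2/3):ℝ) * w ^ (-(2/3):ℝ))
          = 1 / (u ^ (2/3:ℝ) * (v ^ (2/3:ℝ) * w ^ (2/3:ℝ))) := by
        rw [Real.rpow_neg h1.le, Real.rpow_neg h2.le, Real.rpow_neg h3.le]
        field_simp
      rw [this]
      exact one_div_le_one_div_of_le hP hG
    exact step1.trans step2
  · positivity


lemma null_coords : (volume : Measure (ℝ × ℝ × ℝ))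
    {q : ℝ × ℝ × ℝ | q.1 = 0 ∨ q.2.1 = 0 ∨ q.2.2 = 0} = 0 := by
  have e1 : {q : ℝ × ℝ × ℝ | q.1 = 0} = ({0} : Set ℝ) ×ˢ (Set.univ : Set (ℝ × ℝ)) := by
    ext ⟨a,b,c⟩; simp [Set.mem_prod, eq_comm]
  have e2 : {q : ℝ × ℝ × ℝ | q.2.1 = 0} =
      (Set.univ : Set ℝ) ×ˢ (({0} : Set ℝ) ×ˢ (Set.univ : Set ℝ)) := by
    ext ⟨a,b,c⟩; simp [Set.mem_prod, eq_comm]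
  have e3 : {q : ℝ × ℝ × ℝ | q.2.2 = 0} =
      (Set.univ : Set ℝ) ×ˢ ((Set.univ : Set ℝ) ×ˢ ({0} : Set ℝ)) := by
    ext ⟨a,b,c⟩; simp [Set.mem_prod, eq_comm]
  have h1 : (volume : Measure (ℝ × ℝ × ℝ)) {q : ℝ × ℝ × ℝ | q.1 = 0} = 0 := by
    rw [e1, MeasureTheory.Measure.volume_eq_prod, Measure.prod_prod]; simp
  have h2 : (volume : Measure (ℝ × ℝ × ℝ)) {q : ℝ × ℝ × ℝ | q.2.1 = 0} = 0 := by
    rw [e2, MeasureTheory.Measure.volume_eq_prod, Measure.prod_prod,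
      MeasureTheory.Measure.volume_eq_prod, Measure.prod_prod]; simp
  have h3 : (volume : Measure (ℝ × ℝ × ℝ)) {q : ℝ × ℝ × ℝ | q.2.2 = 0} = 0 := by
    rw [e3, MeasureTheory.Measure.volume_eq_prod, Measure.prod_prod,
      MeasureTheory.Measure.volume_eq_prod, Measure.prod_prod]; simp
  have : {q : ℝ × ℝ × ℝ | q.1 = 0 ∨ q.2.1 = 0 ∨ q.2.2 = 0}
      = {q : ℝ × ℝ × ℝ | q.1 = 0} ∪ ({q : ℝ × ℝ × ℝ | q.2.1 = 0} ∪ {q : ℝ × ℝ × ℝ | q.2.2 = 0}) := by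
    ext q; simp [Set.mem_union]
  rw [this]
  exact measure_union_null h1 (measure_union_null h2 h3)

lemma integrable_gg : IntegrableOn gg (Set.Icc 0 2 ×ˢ Set.Icc 0 2 ×ˢ Set.Icc (0:ℝ) 2) := by
  apply Integrable.mono integrable_hh
    (measurable_gg.aestronglyMeasurable.restrict)
  rw [ae_restrict_iff' (by measurability)]
  have hN := null_coords
  filter_upwards [MeasureTheory.measure_eq_zero_iff_ae_notMem.mp hN] with q hq hmem
  push_neg at hq
  obtain ⟨hq1, hq2, hq3⟩ := hq
  obtain ⟨m1, m2, m3⟩ := hmem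
  have p1 : 0 < q.1 := lt_of_le_of_ne m1.1 (Ne.symm hq1)
  have p2 : 0 < q.2.1 := lt_of_le_of_ne m2.1 (Ne.symm hq2)
  have p3 : 0 < q.2.2 := lt_of_le_of_ne m3.1 (Ne.symm hq3)
  rw [Real.norm_of_nonneg (gg_nonneg p1.le p2.le p3.le),
    Real.norm_of_nonneg (hh_pos p1 p2 p3).le]
  exact gg_le_hh p1 p2 p3


def cub (n k : ℕ) : Set ℝ := Set.Ioc ((k:ℝ)/n) (((k:ℝ)+1)/n)

lemma cub_def (n k : ℕ) : cub n k = Set.Ioc ((k:ℝ)/n) (((k:ℝ)+1)/n) := rfl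

lemma cub_disj {n k k' : ℕ} (hn : 1 ≤ n) (h : k ≠ k') : Disjoint (cub n k) (cub n k') := by
  have hn' : (0:ℝ) < n := by exact_mod_cast hn
  rw [cub, cub, Set.Ioc_disjoint_Ioc]
  rcases lt_or_gt_of_ne h with hlt | hlt
  · have h1 : ((k:ℝ)+1)/n ≤ (k':ℝ)/n := by
      gcongr
      exact_mod_cast hlt
    calc min (((k:ℝ)+1)/n) (((k':ℝ)+1)/n) ≤ ((k:ℝ)+1)/n := min_le_left _ _
      _ ≤ (k':ℝ)/n := h1
      _ ≤ max ((k:ℝ)/n) ((k':ℝ)/n) := le_max_right _ _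
  · have h1 : ((k':ℝ)+1)/n ≤ (k:ℝ)/n := by
      gcongr
      exact_mod_cast hlt
    calc min (((k:ℝ)+1)/n) (((k':ℝ)+1)/n) ≤ ((k':ℝ)+1)/n := min_le_right _ _
      _ ≤ (k:ℝ)/n := h1
      _ ≤ max ((k:ℝ)/n) ((k':ℝ)/n) := le_max_left _ _

lemma cub_mem_iff {n k : ℕ} {x : ℝ} : x ∈ cub n k ↔ (k:ℝ)/n < x ∧ x ≤ ((k:ℝ)+1)/n := Iff.rfl

lemma cub_subset {n k : ℕ} (hn : 1 ≤ n) (hk : k + 1 ≤ n) : cub n k ⊆ Set.Icc (0:ℝ) 1 := by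
  have hn' : (0:ℝ) < n := by exact_mod_cast hn
  intro x hx
  obtain ⟨h1, h2⟩ := hx
  constructor
  · have : (0:ℝ) ≤ (k:ℝ)/n := by positivity
    linarith
  · have : ((k:ℝ)+1)/n ≤ 1 := by
      rw [div_le_one hn']
      exact_mod_cast hk
    linarith

lemma cub_subset2 {n k : ℕ} (hn : 1 ≤ n) (hk : k ≤ n) : cub n k ⊆ Set.Icc (0:ℝ) 2 := by
  have hn' : (0:ℝ) < n := by exact_mod_cast hn
  intro x hx
  obtain ⟨h1, h2⟩ := hx
  constructor
  · have : (0:ℝ) ≤ (k:ℝ)/n := by positivity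
    linarith
  · have hkn : (k:ℝ) ≤ n := by exact_mod_cast hk
    have : ((k:ℝ)+1)/n ≤ 2 := by
      rw [div_le_iff₀ hn']
      have : (1:ℝ) ≤ n := by exact_mod_cast hn
      nlinarith
    linarith

lemma cub_volume {n k : ℕ} : volume (cub n k) = ENNReal.ofReal (1/(n:ℝ)) := by
  rw [cub, Real.volume_Ioc]
  congr 1
  ring

lemma cub_cover {n : ℕ} (hn : 1 ≤ n) {x : ℝ} (hx : x ∈ Set.Ioc (1/(n:ℝ)) 1) :
    ∃ k ∈ Finset.Icc 1 n, x ∈ cub n k := by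
  have hn' : (0:ℝ) < n := by exact_mod_cast hn
  obtain ⟨hx1, hx2⟩ := hx
  have hnx1 : (1:ℝ) < n * x := by
    rw [div_lt_iff₀ hn'] at hx1; linarith
  have hnxn : (n:ℝ) * x ≤ n := by nlinarith
  set m : ℕ := ⌈(n:ℝ) * x⌉₊ with hm
  have hm2 : 2 ≤ m := by
    have : 1 < m := Nat.lt_ceil.mpr (by exact_mod_cast hnx1)
    omega
  have hmn : m ≤ n := Nat.ceil_le.mpr (by exact_mod_cast hnxn)
  refine ⟨m - 1, Finset.mem_Icc.mpr ⟨by omega, by omega⟩, ?_⟩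
  have hcast : ((m - 1 : ℕ) : ℝ) = (m:ℝ) - 1 := by
    have : 1 ≤ m := by omega
    push_cast [this]
    ring
  constructor
  · rw [hcast]
    rw [div_lt_iff₀ hn']
    have := Nat.ceil_lt_add_one (show (0:ℝ) ≤ (n:ℝ)*x by positivity)
    rw [← hm] at this
    nlinarith
  · rw [hcast]
    rw [le_div_iff₀ hn']
    have := Nat.le_ceil ((n:ℝ)*x)
    rw [← hm] at this
    nlinarith

section cubes3d

def TT (n : ℕ) : Finset (ℕ × ℕ × ℕ) := Finset.Icc 1 n ×ˢ Finset.Icc 1 n ×ˢ Finset.Icc 1 n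

lemma mem_TT {n : ℕ} {q : ℕ × ℕ × ℕ} : q ∈ TT n ↔
    (1 ≤ q.1 ∧ q.1 ≤ n) ∧ (1 ≤ q.2.1 ∧ q.2.1 ≤ n) ∧ (1 ≤ q.2.2 ∧ q.2.2 ≤ n) := by
  simp [TT, Finset.mem_product, Finset.mem_Icc]

def CC (n : ℕ) (q : ℕ × ℕ × ℕ) : Set (ℝ × ℝ × ℝ) :=
  cub n (q.1 - 1) ×ˢ cub n (q.2.1 - 1) ×ˢ cub n (q.2.2 - 1)

def DD (n : ℕ) (q : ℕ × ℕ × ℕ) : Set (ℝ × ℝ × ℝ) :=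
  cub n q.1 ×ˢ cub n q.2.1 ×ˢ cub n q.2.2

lemma cub_measurable {n k : ℕ} : MeasurableSet (cub n k) := by
  rw [cub_def]; exact measurableSet_Ioc

lemma CC_measurable {n : ℕ} {q : ℕ × ℕ × ℕ} : MeasurableSet (CC n q) :=
  cub_measurable.prod (cub_measurable.prod cub_measurable)

lemma DD_measurable {n : ℕ} {q : ℕ × ℕ × ℕ} : MeasurableSet (DD n q) :=
  cub_measurable.prod (cub_measurable.prod cub_measurable)

lemma prod3_volume {a : Set ℝ} {b : Set ℝ} {c : Set ℝ} :
    volume (a ×ˢ b ×ˢ c) = volume a * (volume b * volume c) := by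
  rw [MeasureTheory.Measure.volume_eq_prod, Measure.prod_prod,
    MeasureTheory.Measure.volume_eq_prod, Measure.prod_prod]

lemma cube_volume3 {n : ℕ} (hn : 1 ≤ n) {k l m : ℕ} :
    (volume (cub n k ×ˢ cub n l ×ˢ cub n m)).toReal = 1/(n:ℝ)^3 := by
  have hn' : (0:ℝ) < n := by exact_mod_cast hn
  rw [prod3_volume, cub_volume, cub_volume, cub_volume, ← ENNReal.ofReal_mul (by positivity),
    ← ENNReal.ofReal_mul (by positivity), ENNReal.toReal_ofReal (by positivity)]
  ring

lemma prod3_disjoint {s s' t t' u u' : Set ℝ}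
    (h : Disjoint s s' ∨ Disjoint t t' ∨ Disjoint u u') :
    Disjoint (s ×ˢ t ×ˢ u) (s' ×ˢ t' ×ˢ u') := by
  rw [Set.disjoint_left]
  rintro ⟨x, y, z⟩ ⟨hx, hy, hz⟩ ⟨hx', hy', hz'⟩
  rcases h with h | h | h
  · exact h.le_bot ⟨hx, hx'⟩
  · exact h.le_bot ⟨hy, hy'⟩
  · exact h.le_bot ⟨hz, hz'⟩

lemma CC_disjoint {n : ℕ} (hn : 1 ≤ n) :
    (↑(TT n) : Set (ℕ × ℕ × ℕ)).Pairwise (Function.onFun Disjoint (CC n)) := by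
  rintro q hq q' hq' hne
  rw [Finset.mem_coe, mem_TT] at hq hq'
  apply prod3_disjoint
  by_cases h1 : q.1 = q'.1
  · by_cases h2 : q.2.1 = q'.2.1
    · have h3 : q.2.2 ≠ q'.2.2 := by
        intro h3
        exact hne (Prod.ext h1 (Prod.ext h2 h3))
      exact Or.inr (Or.inr (cub_disj hn (by omega)))
    · exact Or.inr (Or.inl (cub_disj hn (by omega)))
  · exact Or.inl (cub_disj hn (by omega))

lemma DD_disjoint {n : ℕ} (hn : 1 ≤ n) :
    (↑(TT n) : Set (ℕ × ℕ × ℕ)).Pairwise (Function.onFun Disjoint (DD n)) := by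
  rintro q hq q' hq' hne
  apply prod3_disjoint
  by_cases h1 : q.1 = q'.1
  · by_cases h2 : q.2.1 = q'.2.1
    · have h3 : q.2.2 ≠ q'.2.2 := by
        intro h3
        exact hne (Prod.ext h1 (Prod.ext h2 h3))
      exact Or.inr (Or.inr (cub_disj hn h3))
    · exact Or.inr (Or.inl (cub_disj hn h2))
  · exact Or.inl (cub_disj hn h1)

lemma CC_subset_Icc {n : ℕ} (hn : 1 ≤ n) {q : ℕ × ℕ × ℕ} (hq : q ∈ TT n) :
    CC n q ⊆ Set.Icc 0 1 ×ˢ Set.Icc 0 1 ×ˢ Set.Icc (0:ℝ) 1 := by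
  rw [mem_TT] at hq
  exact Set.prod_mono (cub_subset hn (by omega))
    (Set.prod_mono (cub_subset hn (by omega)) (cub_subset hn (by omega)))

lemma CC_subset_Icc2 {n : ℕ} (hn : 1 ≤ n) {q : ℕ × ℕ × ℕ} (hq : q ∈ TT n) :
    CC n q ⊆ Set.Icc 0 2 ×ˢ Set.Icc 0 2 ×ˢ Set.Icc (0:ℝ) 2 := by
  rw [mem_TT] at hq
  exact Set.prod_mono (cub_subset2 hn (by omega))
    (Set.prod_mono (cub_subset2 hn (by omega)) (cub_subset2 hn (by omega)))

lemma DD_subset_Icc2 {n : ℕ} (hn : 1 ≤ n) {q : ℕ × ℕ × ℕ} (hq : q ∈ TT n) :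
    DD n q ⊆ Set.Icc 0 2 ×ˢ Set.Icc 0 2 ×ˢ Set.Icc (0:ℝ) 2 := by
  rw [mem_TT] at hq
  exact Set.prod_mono (cub_subset2 hn (by omega))
    (Set.prod_mono (cub_subset2 hn (by omega)) (cub_subset2 hn (by omega)))

end cubes3d


noncomputable def ptn (n : ℕ) (q : ℕ × ℕ × ℕ) : ℝ × ℝ × ℝ :=
  ((q.1:ℝ)/n, (q.2.1:ℝ)/n, (q.2.2:ℝ)/n)

lemma cube_lower {n : ℕ} (hn : 1 ≤ n) {q : ℕ × ℕ × ℕ} (hq : q ∈ TT n) :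
    gg (ptn n q) * (1/(n:ℝ)^3) ≤ ∫ x in CC n q, gg x := by
  have hn' : (0:ℝ) < n := by exact_mod_cast hn
  rw [mem_TT] at hq
  have hvol : volume (CC n q) ≠ ⊤ := by
    rw [CC, prod3_volume, cub_volume, cub_volume, cub_volume]
    exact ENNReal.mul_ne_top ENNReal.ofReal_ne_top
      (ENNReal.mul_ne_top ENNReal.ofReal_ne_top ENNReal.ofReal_ne_top)
  have hpt : ∀ x ∈ CC n q, gg (ptn n q) ≤ gg x := by
    rintro ⟨x, y, z⟩ ⟨hx, hy, hz⟩
    rw [cub_def] at hx hy hz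
    have c1 : ((q.1 - 1 : ℕ) : ℝ) + 1 = (q.1 : ℝ) := by
      have := hq.1.1; push_cast [this]; ring
    have c2 : ((q.2.1 - 1 : ℕ) : ℝ) + 1 = (q.2.1 : ℝ) := by
      have := hq.2.1.1; push_cast [this]; ring
    have c3 : ((q.2.2 - 1 : ℕ) : ℝ) + 1 = (q.2.2 : ℝ) := by
      have := hq.2.2.1; push_cast [this]; ring
    have px : 0 < x := lt_of_le_of_lt (by positivity) hx.1
    have py : 0 < y := lt_of_le_of_lt (by positivity) hy.1
    have pz : 0 < z := lt_of_le_of_lt (by positivity) hz.1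
    apply gg_anti px py pz
    · show x ≤ (q.1:ℝ)/n
      rw [← c1]; exact hx.2
    · show y ≤ (q.2.1:ℝ)/n
      rw [← c2]; exact hy.2
    · show z ≤ (q.2.2:ℝ)/n
      rw [← c3]; exact hz.2
  have := MeasureTheory.setIntegral_ge_of_const_le CC_measurable hvol hpt
    (integrable_gg.mono_set (CC_subset_Icc2 hn (mem_TT.mpr hq)))
  rwa [show volume.real (CC n q) = 1/(n:ℝ)^3 from cube_volume3 hn, smul_eq_mul, mul_comm] at this

lemma cube_upper {n : ℕ} (hn : 1 ≤ n) {q : ℕ × ℕ × ℕ} (hq : q ∈ TT n) :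
    ∫ x in DD n q, gg x ≤ gg (ptn n q) * (1/(n:ℝ)^3) := by
  have hn' : (0:ℝ) < n := by exact_mod_cast hn
  rw [mem_TT] at hq
  have hvol : volume (DD n q) < ⊤ := by
    rw [DD, prod3_volume, cub_volume, cub_volume, cub_volume]
    exact ENNReal.mul_lt_top ENNReal.ofReal_lt_top
      (ENNReal.mul_lt_top ENNReal.ofReal_lt_top ENNReal.ofReal_lt_top)
  have hpt : ∀ x ∈ DD n q, gg x ≤ gg (ptn n q) := by
    rintro ⟨x, y, z⟩ ⟨hx, hy, hz⟩
    rw [cub_def] at hx hy hz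
    have e1 : (0:ℝ) < q.1 := by exact_mod_cast hq.1.1
    have e2 : (0:ℝ) < q.2.1 := by exact_mod_cast hq.2.1.1
    have e3 : (0:ℝ) < q.2.2 := by exact_mod_cast hq.2.2.1
    exact gg_anti (a := ptn n q) (b := (x,y,z)) (div_pos e1 hn') (div_pos e2 hn')
      (div_pos e3 hn') hx.1.le hy.1.le hz.1.le
  calc ∫ x in DD n q, gg x ≤ ∫ _x in DD n q, gg (ptn n q) := by
        apply MeasureTheory.setIntegral_mono_on
          (integrable_gg.mono_set (DD_subset_Icc2 hn (mem_TT.mpr hq)))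
          (MeasureTheory.integrableOn_const hvol.ne) DD_measurable hpt
    _ = gg (ptn n q) * (1/(n:ℝ)^3) := by
        rw [MeasureTheory.setIntegral_const, smul_eq_mul,
          show volume.real (DD n q) = 1/(n:ℝ)^3 from cube_volume3 hn, mul_comm]

lemma sum_le_integral {n : ℕ} (hn : 1 ≤ n) :
    ∑ q ∈ TT n, gg (ptn n q) * (1/(n:ℝ)^3)
      ≤ ∫ x in Set.Icc 0 1 ×ˢ Set.Icc 0 1 ×ˢ Set.Icc (0:ℝ) 1, gg x := by
  have hint : IntegrableOn gg (Set.Icc 0 1 ×ˢ Set.Icc 0 1 ×ˢ Set.Icc (0:ℝ) 1) :=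
    integrable_gg.mono_set (Set.prod_mono (Set.Icc_subset_Icc le_rfl one_le_two)
      (Set.prod_mono (Set.Icc_subset_Icc le_rfl one_le_two)
        (Set.Icc_subset_Icc le_rfl one_le_two)))
  calc ∑ q ∈ TT n, gg (ptn n q) * (1/(n:ℝ)^3)
      ≤ ∑ q ∈ TT n, ∫ x in CC n q, gg x :=
        Finset.sum_le_sum fun q hq => cube_lower hn hq
    _ = ∫ x in ⋃ q ∈ TT n, CC n q, gg x :=
        (MeasureTheory.integral_biUnion_finset (TT n) (fun _ _ => CC_measurable)
          (CC_disjoint hn) (fun q hq => integrable_gg.mono_set (CC_subset_Icc2 hn hq))).symm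
    _ ≤ _ := by
        apply MeasureTheory.setIntegral_mono_set hint
        · apply Filter.eventually_of_mem
            (self_mem_ae_restrict ((measurableSet_Icc.prod
              (measurableSet_Icc.prod measurableSet_Icc))))
          rintro ⟨x, y, z⟩ ⟨hx, hy, hz⟩
          exact gg_nonneg hx.1 hy.1 hz.1
        · exact HasSubset.Subset.eventuallyLE (Set.iUnion₂_subset fun q hq => CC_subset_Icc hn hq)

lemma integral_le_sum {n : ℕ} (hn : 1 ≤ n) :
    ∫ x in Set.Ioc (1/(n:ℝ)) 1 ×ˢ Set.Ioc (1/(n:ℝ)) 1 ×ˢ Set.Ioc (1/(n:ℝ)) 1, gg x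
      ≤ ∑ q ∈ TT n, gg (ptn n q) * (1/(n:ℝ)^3) := by
  have hintU : IntegrableOn gg (⋃ q ∈ TT n, DD n q) :=
    integrable_gg.mono_set (Set.iUnion₂_subset fun q hq => DD_subset_Icc2 hn hq)
  calc ∫ x in Set.Ioc (1/(n:ℝ)) 1 ×ˢ Set.Ioc (1/(n:ℝ)) 1 ×ˢ Set.Ioc (1/(n:ℝ)) 1, gg x
      ≤ ∫ x in ⋃ q ∈ TT n, DD n q, gg x := by
        apply MeasureTheory.setIntegral_mono_set hintU
        · apply Filter.eventually_of_mem
            (self_mem_ae_restrict (MeasurableSet.biUnion (TT n).countable_toSet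
              (fun _ _ => DD_measurable)))
          rintro ⟨x, y, z⟩ hmem
          rw [Set.mem_iUnion₂] at hmem
          obtain ⟨q, hq, hx, hy, hz⟩ := hmem
          rw [cub_def] at hx hy hz
          refine gg_nonneg (le_of_lt (lt_of_le_of_lt (by positivity) hx.1))
            (le_of_lt (lt_of_le_of_lt (by positivity) hy.1))
            (le_of_lt (lt_of_le_of_lt (by positivity) hz.1))
        · apply HasSubset.Subset.eventuallyLE
            (t := (⋃ q ∈ TT n, DD n q))
          rintro ⟨x, y, z⟩ ⟨hx, hy, hz⟩
          obtain ⟨k1, hk1, hxk⟩ := cub_cover hn hx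
          obtain ⟨k2, hk2, hyk⟩ := cub_cover hn hy
          obtain ⟨k3, hk3, hzk⟩ := cub_cover hn hz
          rw [Set.mem_iUnion₂]
          refine ⟨(k1, k2, k3), ?_, hxk, hyk, hzk⟩
          rw [mem_TT]
          rw [Finset.mem_Icc] at hk1 hk2 hk3
          exact ⟨hk1, hk2, hk3⟩
    _ = ∑ q ∈ TT n, ∫ x in DD n q, gg x :=
        MeasureTheory.integral_biUnion_finset (TT n) (fun _ _ => DD_measurable)
          (DD_disjoint hn) (fun q hq => integrable_gg.mono_set (DD_subset_Icc2 hn hq))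
    _ ≤ _ := Finset.sum_le_sum fun q hq => cube_upper hn hq


lemma Ioc_ae_Icc : (Set.Ioc 0 1 ×ˢ Set.Ioc 0 1 ×ˢ Set.Ioc (0:ℝ) 1 : Set (ℝ×ℝ×ℝ))
    =ᶠ[ae volume] (Set.Icc 0 1 ×ˢ Set.Icc 0 1 ×ˢ Set.Icc (0:ℝ) 1 : Set (ℝ×ℝ×ℝ)) := by
  rw [MeasureTheory.ae_eq_set]
  constructor
  · apply measure_mono_null (Set.diff_subset_diff_left
      (Set.prod_mono Set.Ioc_subset_Icc_self
        (Set.prod_mono Set.Ioc_subset_Icc_self Set.Ioc_subset_Icc_self)))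
    simp
  · apply measure_mono_null ?_ null_coords
    rintro ⟨x, y, z⟩ ⟨⟨hx, hy, hz⟩, hns⟩
    simp only [Set.mem_setOf_eq]
    by_contra hc
    push_neg at hc
    obtain ⟨h1, h2, h3⟩ := hc
    exact hns ⟨⟨lt_of_le_of_ne hx.1 (Ne.symm h1), hx.2⟩,
      ⟨lt_of_le_of_ne hy.1 (Ne.symm h2), hy.2⟩,
      ⟨lt_of_le_of_ne hz.1 (Ne.symm h3), hz.2⟩⟩

lemma tendsto_int : Tendsto
    (fun k : ℕ => ∫ x in Set.Ioc (1/((k:ℝ)+1)) 1 ×ˢ Set.Ioc (1/((k:ℝ)+1)) 1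
        ×ˢ Set.Ioc (1/((k:ℝ)+1)) 1, gg x) atTop
    (nhds (∫ x in Set.Icc 0 1 ×ˢ Set.Icc 0 1 ×ˢ Set.Icc (0:ℝ) 1, gg x)) := by
  set S : ℕ → Set (ℝ×ℝ×ℝ) := fun k => Set.Ioc (1/((k:ℝ)+1)) 1 ×ˢ Set.Ioc (1/((k:ℝ)+1)) 1
        ×ˢ Set.Ioc (1/((k:ℝ)+1)) 1 with hS
  have hmono : Monotone S := by
    intro k k' hk
    have h1 : 1/((k':ℝ)+1) ≤ 1/((k:ℝ)+1) := by
      apply one_div_le_one_div_of_le (by positivity)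
      have : (k:ℝ) ≤ k' := by exact_mod_cast hk
      linarith
    exact Set.prod_mono (Set.Ioc_subset_Ioc h1 le_rfl)
      (Set.prod_mono (Set.Ioc_subset_Ioc h1 le_rfl) (Set.Ioc_subset_Ioc h1 le_rfl))
  have hmeas : ∀ k, MeasurableSet (S k) := fun k =>
    measurableSet_Ioc.prod (measurableSet_Ioc.prod measurableSet_Ioc)
  have hU : (⋃ k, S k) = Set.Ioc 0 1 ×ˢ Set.Ioc 0 1 ×ˢ Set.Ioc (0:ℝ) 1 := by
    apply Set.Subset.antisymm
    · apply Set.iUnion_subset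
      intro k
      exact Set.prod_mono (Set.Ioc_subset_Ioc (by positivity) le_rfl)
        (Set.prod_mono (Set.Ioc_subset_Ioc (by positivity) le_rfl)
          (Set.Ioc_subset_Ioc (by positivity) le_rfl))
    · rintro ⟨x, y, z⟩ ⟨hx, hy, hz⟩
      have hpos : 0 < min x (min y z) := lt_min hx.1 (lt_min hy.1 hz.1)
      obtain ⟨k, hk⟩ := exists_nat_one_div_lt hpos
      refine Set.mem_iUnion.mpr ⟨k, ⟨⟨?_, hx.2⟩, ⟨?_, hy.2⟩, ⟨?_, hz.2⟩⟩⟩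
      · exact hk.trans_le ((min_le_left _ _))
      · exact hk.trans_le ((min_le_right _ _).trans (min_le_left _ _))
      · exact hk.trans_le ((min_le_right _ _).trans (min_le_right _ _))
  have hint : IntegrableOn gg (⋃ k, S k) := by
    rw [hU]
    exact integrable_gg.mono_set (Set.prod_mono
      (Set.Ioc_subset_Icc_self.trans (Set.Icc_subset_Icc le_rfl one_le_two))
      (Set.prod_mono (Set.Ioc_subset_Icc_self.trans (Set.Icc_subset_Icc le_rfl one_le_two))
        (Set.Ioc_subset_Icc_self.trans (Set.Icc_subset_Icc le_rfl one_le_two))))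
  have := MeasureTheory.tendsto_setIntegral_of_monotone hmeas hmono hint
  rw [hU] at this
  rwa [MeasureTheory.setIntegral_congr_set Ioc_ae_Icc] at this

lemma J_pos : 0 < ∫ x in Set.Icc 0 1 ×ˢ Set.Icc 0 1 ×ˢ Set.Icc (0:ℝ) 1, gg x := by
  set s : Set (ℝ×ℝ×ℝ) := Set.Icc (1/5) (1/4) ×ˢ Set.Icc (1/5) (1/4) ×ˢ Set.Icc (1/5:ℝ) (1/4)
    with hs
  have hsub : s ⊆ Set.Icc 0 1 ×ˢ Set.Icc 0 1 ×ˢ Set.Icc (0:ℝ) 1 :=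
    Set.prod_mono (Set.Icc_subset_Icc (by norm_num) (by norm_num))
      (Set.prod_mono (Set.Icc_subset_Icc (by norm_num) (by norm_num))
        (Set.Icc_subset_Icc (by norm_num) (by norm_num)))
  have hint : IntegrableOn gg (Set.Icc 0 1 ×ˢ Set.Icc 0 1 ×ˢ Set.Icc (0:ℝ) 1) :=
    integrable_gg.mono_set (Set.prod_mono (Set.Icc_subset_Icc le_rfl one_le_two)
      (Set.prod_mono (Set.Icc_subset_Icc le_rfl one_le_two)
        (Set.Icc_subset_Icc le_rfl one_le_two)))
  have hlow : (4/3 : ℝ) * (volume s).toReal ≤ ∫ x in s, gg x := by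
    rw [mul_comm, ← smul_eq_mul]
    change volume.real s • (4/3:ℝ) ≤ _
    apply MeasureTheory.setIntegral_ge_of_const_le
      (measurableSet_Icc.prod (measurableSet_Icc.prod measurableSet_Icc))
    · rw [prod3_volume]
      exact ENNReal.mul_ne_top (by simp [Real.volume_Icc])
        (ENNReal.mul_ne_top (by simp [Real.volume_Icc]) (by simp [Real.volume_Icc]))
    · rintro ⟨x, y, z⟩ ⟨hx, hy, hz⟩
      have hx1 : (1/5:ℝ) ≤ x := hx.1
      have hx2 : x ≤ (1/4:ℝ) := hx.2
      have hy1 : (1/5:ℝ) ≤ y := hy.1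
      have hy2 : y ≤ (1/4:ℝ) := hy.2
      have hz1 : (1/5:ℝ) ≤ z := hz.1
      have hz2 : z ≤ (1/4:ℝ) := hz.2
      have hgg0 : gg (x, y, z) = if x + y + z ≤ 1 then
          (1 - (x + y + z)) / (x*y + x*z + y*z) else 0 := rfl
      have hgg : gg (x, y, z) = (1 - (x + y + z)) / (x*y + x*z + y*z) := by
        rw [hgg0, if_pos (by linarith)]
      rw [hgg]
      have hD : (0:ℝ) < x*y + x*z + y*z := by nlinarith
      rw [le_div_iff₀ hD]
      nlinarith
    · exact hint.mono_set hsub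
  have hvol : (volume s).toReal = (1/20)^3 := by
    rw [hs, prod3_volume, Real.volume_Icc, ← ENNReal.ofReal_mul (by norm_num),
      ← ENNReal.ofReal_mul (by norm_num), ENNReal.toReal_ofReal (by norm_num)]
    norm_num
  have h2 : ∫ x in s, gg x ≤ ∫ x in Set.Icc 0 1 ×ˢ Set.Icc 0 1 ×ˢ Set.Icc (0:ℝ) 1, gg x := by
    apply MeasureTheory.setIntegral_mono_set hint
    · apply Filter.eventually_of_mem (self_mem_ae_restrict
        (measurableSet_Icc.prod (measurableSet_Icc.prod measurableSet_Icc)))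
      rintro ⟨x, y, z⟩ ⟨hx, hy, hz⟩
      exact gg_nonneg hx.1 hy.1 hz.1
    · exact HasSubset.Subset.eventuallyLE hsub
  calc (0:ℝ) < (4/3) * (1/20)^3 := by norm_num
    _ = (4/3) * (volume s).toReal := by rw [hvol]
    _ ≤ ∫ x in s, gg x := hlow
    _ ≤ _ := h2


lemma sum_eq (n : ℕ) :
    (∑ p ∈ (Finset.Icc 1 n ×ˢ Finset.Icc 1 n ×ˢ
        Finset.Icc 1 n ×ˢ Finset.Icc 1 n).filter
        (fun p : ℕ × ℕ × ℕ × ℕ => p.1 + p.2.1 + p.2.2.1 + p.2.2.2 ≤ n),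
      1 / ((p.2.1 : ℝ) * p.2.2.1 + (p.2.1 : ℝ) * p.2.2.2 + (p.2.2.2 : ℝ) * p.2.2.1))
    = ∑ q ∈ TT n, ((n - (q.1 + q.2.1 + q.2.2) : ℕ) : ℝ) *
      (1 / ((q.1 : ℝ) * q.2.1 + (q.1 : ℝ) * q.2.2 + (q.2.2 : ℝ) * q.2.1)) := by
  rw [Finset.sum_filter, Finset.sum_product]
  rw [Finset.sum_comm]
  apply Finset.sum_congr rfl
  intro q hq
  have hcard : ((Finset.Icc 1 n).filter fun k => k + q.1 + q.2.1 + q.2.2 ≤ n).card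
      = n - (q.1 + q.2.1 + q.2.2) := by
    have : ((Finset.Icc 1 n).filter fun k => k + q.1 + q.2.1 + q.2.2 ≤ n)
        = Finset.Icc 1 (n - (q.1 + q.2.1 + q.2.2)) := by
      ext k
      simp only [Finset.mem_filter, Finset.mem_Icc]
      omega
    rw [this, Nat.card_Icc]
    omega
  calc ∑ k ∈ Finset.Icc 1 n, (if k + q.1 + q.2.1 + q.2.2 ≤ n then
          (1 : ℝ) / ((q.1 : ℝ) * q.2.1 + (q.1 : ℝ) * q.2.2 + (q.2.2 : ℝ) * q.2.1) else 0)
      = ∑ k ∈ (Finset.Icc 1 n).filter (fun k => k + q.1 + q.2.1 + q.2.2 ≤ n),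
          (1 : ℝ) / ((q.1 : ℝ) * q.2.1 + (q.1 : ℝ) * q.2.2 + (q.2.2 : ℝ) * q.2.1) :=
        (Finset.sum_filter _ _).symm
    _ = _ := by
        rw [Finset.sum_const, hcard, nsmul_eq_mul]

lemma gg_ptn {n : ℕ} (hn : 1 ≤ n) {q : ℕ × ℕ × ℕ} (hq : q ∈ TT n) :
    gg (ptn n q) = (n : ℝ) * (((n - (q.1 + q.2.1 + q.2.2) : ℕ) : ℝ) *
      (1 / ((q.1 : ℝ) * q.2.1 + (q.1 : ℝ) * q.2.2 + (q.2.2 : ℝ) * q.2.1))) := by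
  have hn' : (0:ℝ) < n := by exact_mod_cast hn
  rw [mem_TT] at hq
  have e1 : (0:ℝ) < q.1 := by exact_mod_cast hq.1.1
  have e2 : (0:ℝ) < q.2.1 := by exact_mod_cast hq.2.1.1
  have e3 : (0:ℝ) < q.2.2 := by exact_mod_cast hq.2.2.1
  unfold gg
  rw [ptn]
  dsimp only
  by_cases hm : q.1 + q.2.1 + q.2.2 ≤ n
  · simp only [if_pos (show (q.1:ℝ)/n + (q.2.1:ℝ)/n + (q.2.2:ℝ)/n ≤ 1 by
      rw [← add_div, ← add_div, div_le_one hn']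
      exact_mod_cast hm)]
    have hcast : ((n - (q.1 + q.2.1 + q.2.2) : ℕ) : ℝ)
        = (n : ℝ) - ((q.1 : ℝ) + q.2.1 + q.2.2) := by
      push_cast [hm]
      ring
    rw [hcast]
    have hD : ((q.1:ℝ) * q.2.1 + (q.1:ℝ) * q.2.2 + (q.2.2:ℝ) * q.2.1) ≠ 0 := by positivity
    field_simp
  · simp only [if_neg (show ¬ ((q.1:ℝ)/n + (q.2.1:ℝ)/n + (q.2.2:ℝ)/n ≤ 1) by
      rw [← add_div, ← add_div, div_le_one hn']
      intro hcon
      exact hm (by exact_mod_cast hcon))]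
    have : n - (q.1 + q.2.1 + q.2.2) = 0 := by omega
    rw [this]
    simp

/-- As `n → ∞`, the sum `∑ 1/(rℓ + rs + sℓ)` over integers `k₁, r, ℓ, s ≥ 1` with
`k₁ + r + ℓ + s ≤ n` is asymptotically equivalent to `J·n²`, where
`J = ∫_{[0,1]³} (1−(u+v+w))·𝟙_{u+v+w ≤ 1}/(uv+uw+vw)`. -/
theorem sum_inv_rl_rs_sl_asymptotic :
    Tendsto (fun n : ℕ =>
      (∑ p ∈ (Finset.Icc 1 n ×ˢ Finset.Icc 1 n ×ˢ
          Finset.Icc 1 n ×ˢ Finset.Icc 1 n).filter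
          (fun p : ℕ × ℕ × ℕ × ℕ => p.1 + p.2.1 + p.2.2.1 + p.2.2.2 ≤ n),
        1 / ((p.2.1 : ℝ) * p.2.2.1 + (p.2.1 : ℝ) * p.2.2.2 + (p.2.2.2 : ℝ) * p.2.2.1))
        / ((∫ q in (Set.Icc (0:ℝ) 1) ×ˢ (Set.Icc (0:ℝ) 1) ×ˢ (Set.Icc (0:ℝ) 1),
            (if q.1 + q.2.1 + q.2.2 ≤ 1 then
              (1 - (q.1 + q.2.1 + q.2.2)) / (q.1 * q.2.1 + q.1 * q.2.2 + q.2.1 * q.2.2)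
            else 0)) * (n : ℝ) ^ 2))
      atTop (nhds 1) := by
  set J : ℝ := ∫ x in Set.Icc 0 1 ×ˢ Set.Icc 0 1 ×ˢ Set.Icc (0:ℝ) 1, gg x with hJdef
  have hJint : (∫ q in (Set.Icc (0:ℝ) 1) ×ˢ (Set.Icc (0:ℝ) 1) ×ˢ (Set.Icc (0:ℝ) 1),
      (if q.1 + q.2.1 + q.2.2 ≤ 1 then
        (1 - (q.1 + q.2.1 + q.2.2)) / (q.1 * q.2.1 + q.1 * q.2.2 + q.2.1 * q.2.2)
      else 0)) = J := rfl
  set Sn : ℕ → ℝ := fun n =>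
      (∑ p ∈ (Finset.Icc 1 n ×ˢ Finset.Icc 1 n ×ˢ
          Finset.Icc 1 n ×ˢ Finset.Icc 1 n).filter
          (fun p : ℕ × ℕ × ℕ × ℕ => p.1 + p.2.1 + p.2.2.1 + p.2.2.2 ≤ n),
        1 / ((p.2.1 : ℝ) * p.2.2.1 + (p.2.1 : ℝ) * p.2.2.2 + (p.2.2.2 : ℝ) * p.2.2.1))
    with hSn
  set Bn : ℕ → ℝ := fun n => ∑ q ∈ TT n, gg (ptn n q) * (1/(n:ℝ)^3) with hBn
  have h_eq : ∀ n : ℕ, 1 ≤ n → Bn n = Sn n / (n:ℝ)^2 := by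
    intro n hn
    have hn' : (0:ℝ) < n := by exact_mod_cast hn
    have : Bn n = ∑ q ∈ TT n, ((n:ℝ) * (((n - (q.1 + q.2.1 + q.2.2) : ℕ) : ℝ) *
        (1 / ((q.1 : ℝ) * q.2.1 + (q.1 : ℝ) * q.2.2 + (q.2.2 : ℝ) * q.2.1)))) * (1/(n:ℝ)^3) :=
      Finset.sum_congr rfl fun q hq => by rw [gg_ptn hn hq]
    rw [this, hSn]
    simp only
    rw [sum_eq n, Finset.sum_div]
    apply Finset.sum_congr rfl
    intro q hq
    rw [mem_TT] at hq
    have e1 : (0:ℝ) < q.1 := by exact_mod_cast hq.1.1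
    have e2 : (0:ℝ) < q.2.1 := by exact_mod_cast hq.2.1.1
    have e3 : (0:ℝ) < q.2.2 := by exact_mod_cast hq.2.2.1
    have hD : ((q.1:ℝ) * q.2.1 + (q.1:ℝ) * q.2.2 + (q.2.2:ℝ) * q.2.1) ≠ 0 := by positivity
    field_simp
  have hBtend : Tendsto Bn atTop (nhds J) := by
    have hlow : Tendsto (fun n : ℕ => ∫ x in Set.Ioc (1/(((n-1:ℕ):ℝ)+1)) 1
        ×ˢ Set.Ioc (1/(((n-1:ℕ):ℝ)+1)) 1 ×ˢ Set.Ioc (1/(((n-1:ℕ):ℝ)+1)) 1, gg x)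
        atTop (nhds J) := tendsto_int.comp (tendsto_sub_atTop_nat 1)
    apply tendsto_of_tendsto_of_tendsto_of_le_of_le' hlow tendsto_const_nhds
    · filter_upwards [eventually_ge_atTop 1] with n hn
      have hcast : (((n-1:ℕ):ℝ)+1) = (n:ℝ) := by
        have : 1 ≤ n := hn
        push_cast [this]
        ring
      rw [hcast]
      exact integral_le_sum hn
    · filter_upwards [eventually_ge_atTop 1] with n hn
      exact sum_le_integral hn
  have hA : Tendsto (fun n : ℕ => Sn n / (n:ℝ)^2) atTop (nhds J) := by
    apply hBtend.congr'
    filter_upwards [eventually_ge_atTop 1] with n hn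
    exact h_eq n hn
  have hfinal := hA.div_const J
  rw [div_self (ne_of_gt J_pos)] at hfinal
  apply hfinal.congr
  intro n
  rw [hJint, div_div, mul_comm]
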